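/- Let n ≥ 1, m ≥ 0, and 0 ≤ l ≤ n. Then, as an identity in MvPolynomial (Fin n) ℤ: (x_1 x_2 ⋯ x_n)^m · Λ^l(X) · det(x_i^{n−j})_{1≤i,j≤n} = det( x_i^{ν_j + n − j} )_{1≤i,j≤n}, where ν_j = m+1 for 1 ≤ j ≤ l and ν_j = m for l < j ≤ n. Equivalently, Λ^n(X)^m · Λ^l(X) = S_{(m^n)+(1^l)}(X), i.e. the product of the m-th power of the top elementary symmetric polynomial with the l-th elementary symmetric polynomial is the Schur polynomial of the near-rectangular shape (m^n)+(1^l). -/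

import Mathlib

open Finset MvPolynomial

lemma det_map_C' {Rp : Type*} [CommRing Rp] {N : ℕ} (A : Matrix (Fin N) (Fin N) Rp) :
    (A.map ⇑(Polynomial.C : Rp →+* Polynomial Rp)).det = Polynomial.C A.det := by
  rw [← RingHom.mapMatrix_apply, ← RingHom.map_det]

/-- Determinant of the "reversed" (decreasing powers) Vandermonde matrix. -/
lemma det_vandermonde_rev' {R : Type*} [CommRing R] {N : ℕ} (u : Fin N → R) :
    (Matrix.of fun i j : Fin N => u i ^ (N - 1 - (j : ℕ))).det
      = ∏ i : Fin N, ∏ j ∈ Finset.Ioi i, (u i - u j) := by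
  have hM : (Matrix.of fun i j : Fin N => u i ^ (N - 1 - (j : ℕ)))
      = (Matrix.vandermonde (u ∘ Fin.rev)).submatrix Fin.revPerm Fin.revPerm := by
    ext i j
    simp only [Matrix.of_apply, Matrix.submatrix_apply, Matrix.vandermonde_apply,
      Function.comp_apply, Fin.revPerm_apply, Fin.rev_rev, Fin.val_rev]
    congr 1
    omega
  rw [hM, Matrix.det_submatrix_equiv_self, Matrix.det_vandermonde]
  rw [Finset.prod_sigma', Finset.prod_sigma']
  refine Finset.prod_nbij' (fun p => ⟨p.2.rev, p.1.rev⟩) (fun p => ⟨p.2.rev, p.1.rev⟩)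
    ?_ ?_ ?_ ?_ ?_
  · rintro ⟨a, b⟩ hab
    simp only [Finset.mem_sigma, Finset.mem_univ, Finset.mem_Ioi, true_and] at hab ⊢
    exact Fin.rev_lt_rev.mpr hab
  · rintro ⟨a, b⟩ hab
    simp only [Finset.mem_sigma, Finset.mem_univ, Finset.mem_Ioi, true_and] at hab ⊢
    exact Fin.rev_lt_rev.mpr hab
  · rintro ⟨a, b⟩ _; simp
  · rintro ⟨a, b⟩ _; simp
  · rintro ⟨a, b⟩ _
    simp [Function.comp]

/-- Splitting off the first row of the pair-product over `Fin (n+1)`. -/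
lemma pair_prod_succ' {R : Type*} [CommRing R] {n : ℕ} (f : Fin (n + 1) → Fin (n + 1) → R) :
    (∏ i : Fin (n + 1), ∏ j ∈ Finset.Ioi i, f i j)
      = (∏ j : Fin n, f 0 j.succ) *
        ∏ i : Fin n, ∏ j ∈ Finset.Ioi i, f i.succ j.succ := by
  rw [Fin.prod_univ_succ]
  congr 1
  · exact Fin.prod_Ioi_zero _
  · exact Finset.prod_congr rfl fun i _ => Fin.prod_Ioi_succ _ i

lemma key_esymm_mul_det (n l : ℕ) (hl : l ≤ n) :
    MvPolynomial.esymm (Fin n) ℤ l *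
        (Matrix.of fun i j : Fin n =>
          (MvPolynomial.X i : MvPolynomial (Fin n) ℤ) ^ (n - 1 - (j : ℕ))).det
      = (Matrix.of fun i j : Fin n =>
          (MvPolynomial.X i : MvPolynomial (Fin n) ℤ) ^
            ((if (j : ℕ) < l then 1 else 0) + (n - 1 - (j : ℕ)))).det := by
  classical
  set Rp := MvPolynomial (Fin n) ℤ with hRp
  set D : Rp := (Matrix.of fun i j : Fin n =>
      (MvPolynomial.X i : Rp) ^ (n - 1 - (j : ℕ))).det with hD
  set v : Fin (n + 1) → Polynomial Rp :=
    Fin.cons Polynomial.X (fun i => Polynomial.C (MvPolynomial.X i)) with hv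
  set M : Matrix (Fin (n + 1)) (Fin (n + 1)) (Polynomial Rp) :=
    Matrix.of fun i j => v i ^ (n - (j : ℕ)) with hM
  set A : Fin (n + 1) → Rp := fun j =>
    (Matrix.of fun i k : Fin n =>
      (MvPolynomial.X i : Rp) ^ (n - (j.succAbove k : ℕ))).det with hA
  -- first evaluation of det M
  have h1 : M.det = (∏ i : Fin n, (Polynomial.X - Polynomial.C (MvPolynomial.X i))) *
      Polynomial.C D := by
    have hdet : M.det = ∏ i : Fin (n + 1), ∏ j ∈ Finset.Ioi i, (v i - v j) := by
      have h := det_vandermonde_rev' v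
      have : (Matrix.of fun i j : Fin (n + 1) => v i ^ (n + 1 - 1 - (j : ℕ))) = M := by
        ext i j; simp [hM]
      rwa [this] at h
    have hfirst : (∏ j : Fin n, (v 0 - v j.succ))
        = ∏ i : Fin n, (Polynomial.X - Polynomial.C (MvPolynomial.X i)) :=
      Finset.prod_congr rfl fun j _ => by rw [hv]; simp
    have hsecond : (∏ i : Fin n, ∏ j ∈ Finset.Ioi i, (v i.succ - v j.succ))
        = Polynomial.C D := by
      rw [hD, det_vandermonde_rev', map_prod]
      refine Finset.prod_congr rfl fun i _ => ?_
      rw [map_prod]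
      refine Finset.prod_congr rfl fun j _ => ?_
      rw [hv]; simp
    rw [hdet, pair_prod_succ', hfirst, hsecond]
  -- Laplace expansion of det M along row 0
  have h2 : M.det = ∑ j : Fin (n + 1), (-1 : Polynomial Rp) ^ (j : ℕ) *
      Polynomial.X ^ (n - (j : ℕ)) * Polynomial.C (A j) := by
    rw [Matrix.det_succ_row_zero]
    refine Finset.sum_congr rfl fun j _ => ?_
    have e1 : M 0 j = Polynomial.X ^ (n - (j : ℕ)) := by simp [hM, hv]
    have e2 : (M.submatrix Fin.succ j.succAbove)
        = (Matrix.of fun i k : Fin n =>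
            (MvPolynomial.X i : Rp) ^ (n - (j.succAbove k : ℕ))).map ⇑Polynomial.C := by
      ext i k
      simp [hM, hv, map_pow]
    rw [e1, e2, det_map_C', hA]
  -- compare coefficients at X ^ (n - l)
  have hco : ((∏ i : Fin n, (Polynomial.X - Polynomial.C (MvPolynomial.X i))) *
        Polynomial.C D).coeff (n - l)
      = (∑ j : Fin (n + 1), (-1 : Polynomial Rp) ^ (j : ℕ) *
          Polynomial.X ^ (n - (j : ℕ)) * Polynomial.C (A j)).coeff (n - l) := by
    rw [← h1, ← h2]
  -- LHS coefficient
  have hP : Polynomial.coeff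
        (∏ i : Fin n, (Polynomial.X - Polynomial.C (MvPolynomial.X i))) (n - l)
      = (-1 : Rp) ^ l * MvPolynomial.esymm (Fin n) ℤ l := by
    let s : Multiset Rp := Finset.univ.val.map fun i : Fin n => (MvPolynomial.X i : Rp)
    have hcard : Multiset.card s = n := by simp [s]
    have hprod : (∏ i : Fin n, (Polynomial.X - Polynomial.C (MvPolynomial.X i)))
        = (s.map fun t => Polynomial.X - Polynomial.C t).prod := by
      rw [Finset.prod_eq_multiset_prod]
      simp [s, Multiset.map_map, Function.comp_def]
    have hk : n - l ≤ Multiset.card s := by rw [hcard]; omega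
    have hmul := Multiset.prod_X_sub_C_coeff s hk
    rw [hprod, hmul, hcard]
    have h' : n - (n - l) = l := by omega
    rw [h', MvPolynomial.esymm_eq_multiset_esymm]
  rw [Polynomial.coeff_mul_C, hP] at hco
  -- RHS coefficient
  have hQ : (∑ j : Fin (n + 1), (-1 : Polynomial Rp) ^ (j : ℕ) *
        Polynomial.X ^ (n - (j : ℕ)) * Polynomial.C (A j)).coeff (n - l)
      = (-1 : Rp) ^ l * A ⟨l, by omega⟩ := by
    rw [Polynomial.finset_sum_coeff]
    have hterm : ∀ j : Fin (n + 1),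
        ((-1 : Polynomial Rp) ^ (j : ℕ) * Polynomial.X ^ (n - (j : ℕ)) *
          Polynomial.C (A j)).coeff (n - l)
        = if n - l = n - (j : ℕ) then (-1 : Rp) ^ (j : ℕ) * A j else 0 := by
      intro j
      have hre : (-1 : Polynomial Rp) ^ (j : ℕ) * Polynomial.X ^ (n - (j : ℕ)) *
          Polynomial.C (A j)
          = Polynomial.C ((-1 : Rp) ^ (j : ℕ) * A j) * Polynomial.X ^ (n - (j : ℕ)) := by
        rw [map_mul, map_pow, map_neg, map_one]; ring
      rw [hre, Polynomial.coeff_C_mul_X_pow]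
    rw [Finset.sum_congr rfl fun j _ => hterm j]
    rw [Finset.sum_eq_single (⟨l, by omega⟩ : Fin (n + 1))]
    · simp
    · intro j _ hj
      have hjv : (j : ℕ) ≠ l := fun h => hj (Fin.ext h)
      have hne : ¬ (n - l = n - (j : ℕ)) := by
        have := j.isLt; omega
      rw [if_neg hne]
    · intro h; exact absurd (Finset.mem_univ _) h
  rw [hQ] at hco
  -- cancel (-1)^l
  have hcancel := congrArg (fun x => (-1 : Rp) ^ l * x) hco
  simp only [← mul_assoc, ← mul_pow, neg_mul_neg, one_mul, one_pow] at hcancel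
  norm_num at hcancel
  have hmat : (Matrix.of fun i k : Fin n =>
        (MvPolynomial.X i : Rp) ^ (n - (((⟨l, by omega⟩ : Fin (n + 1))).succAbove k : ℕ)))
      = Matrix.of fun i k : Fin n =>
        (MvPolynomial.X i : Rp) ^ ((if (k : ℕ) < l then 1 else 0) + (n - 1 - (k : ℕ))) := by
    ext i k
    simp only [Matrix.of_apply]
    have he : (((⟨l, by omega⟩ : Fin (n + 1)).succAbove k : Fin (n + 1)) : ℕ)
        = if (k : ℕ) < l then (k : ℕ) else (k : ℕ) + 1 := by
      rcases lt_or_ge (k : ℕ) l with h | h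
      · rw [Fin.succAbove_of_castSucc_lt _ _ (by simp [Fin.lt_def, h]), if_pos h]
        rfl
      · rw [Fin.succAbove_of_le_castSucc _ _ (by simp [Fin.le_def, h]), if_neg (not_lt.mpr h)]
        rfl
    have he2 : n - (if (k : ℕ) < l then (k : ℕ) else (k : ℕ) + 1)
        = (if (k : ℕ) < l then 1 else 0) + (n - 1 - (k : ℕ)) := by
      have := k.isLt
      split_ifs <;> omega
    rw [he, he2]
  have hAl : A ⟨l, by omega⟩ = (Matrix.of fun i k : Fin n =>
      (MvPolynomial.X i : Rp) ^
        ((if (k : ℕ) < l then 1 else 0) + (n - 1 - (k : ℕ)))).det := by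
    rw [hA]
    exact congrArg Matrix.det hmat
  rw [hcancel, hAl]

/-- `Λ^n(X)^m ⋅ Λ^l(X) = S_{(m^n)+(1^l)}(X)`: the product of the `m`-th power
of the top elementary symmetric polynomial with the `l`-th elementary
symmetric polynomial is the Schur polynomial of the near-rectangular shape
`ν = (m+1, …, m+1, m, …, m)` (`l` parts equal to `m+1`), in the alternant form
`(x_1⋯x_n)^m ⋅ Λ^l(X) ⋅ det(x_i^{n−j}) = det(x_i^{ν_j+n−j})`. -/
theorem esymm_pow_mul_esymm_eq_schur (n m l : ℕ) (hn : 1 ≤ n) (hl : l ≤ n) :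
    (∏ i : Fin n, MvPolynomial.X i) ^ m * MvPolynomial.esymm (Fin n) ℤ l *
        (Matrix.of fun i j : Fin n =>
          (MvPolynomial.X i : MvPolynomial (Fin n) ℤ) ^ (n - 1 - (j : ℕ))).det
      = (Matrix.of fun i j : Fin n =>
          MvPolynomial.X i ^
            ((if (j : ℕ) < l then m + 1 else m) + (n - 1 - (j : ℕ)))).det := by
  have hsplit : (Matrix.of fun i j : Fin n =>
        (MvPolynomial.X i : MvPolynomial (Fin n) ℤ) ^
          ((if (j : ℕ) < l then m + 1 else m) + (n - 1 - (j : ℕ))))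
      = Matrix.of fun i j : Fin n =>
          (MvPolynomial.X i) ^ m *
            (MvPolynomial.X i) ^ ((if (j : ℕ) < l then 1 else 0) + (n - 1 - (j : ℕ))) := by
    ext i j
    simp only [Matrix.of_apply]
    have hexp : (if (j : ℕ) < l then m + 1 else m) + (n - 1 - (j : ℕ))
        = m + ((if (j : ℕ) < l then 1 else 0) + (n - 1 - (j : ℕ))) := by
      split_ifs <;> omega
    rw [hexp, pow_add]
  calc (∏ i : Fin n, MvPolynomial.X i) ^ m * MvPolynomial.esymm (Fin n) ℤ l *
        (Matrix.of fun i j : Fin n =>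
          (MvPolynomial.X i : MvPolynomial (Fin n) ℤ) ^ (n - 1 - (j : ℕ))).det
      = (∏ i : Fin n, (MvPolynomial.X i : MvPolynomial (Fin n) ℤ) ^ m) *
        (MvPolynomial.esymm (Fin n) ℤ l *
          (Matrix.of fun i j : Fin n =>
            (MvPolynomial.X i : MvPolynomial (Fin n) ℤ) ^ (n - 1 - (j : ℕ))).det) := by
        rw [← Finset.prod_pow]; ring
    _ = (∏ i : Fin n, (MvPolynomial.X i : MvPolynomial (Fin n) ℤ) ^ m) *
        (Matrix.of fun i j : Fin n =>
          (MvPolynomial.X i : MvPolynomial (Fin n) ℤ) ^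
            ((if (j : ℕ) < l then 1 else 0) + (n - 1 - (j : ℕ)))).det := by
        rw [key_esymm_mul_det n l hl]
    _ = (Matrix.of fun i j : Fin n =>
          (MvPolynomial.X i : MvPolynomial (Fin n) ℤ) ^ m *
            (MvPolynomial.X i) ^ ((if (j : ℕ) < l then 1 else 0) + (n - 1 - (j : ℕ)))).det :=
        (Matrix.det_mul_column _ _).symm
    _ = (Matrix.of fun i j : Fin n =>
          MvPolynomial.X i ^
            ((if (j : ℕ) < l then m + 1 else m) + (n - 1 - (j : ℕ)))).det :=
        (congrArg Matrix.det hsplit).symm
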